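/- Define 𝒜y := Σ_k Σ_{j=1}^{r_k} μ_{k,j}⁻¹ (u_{k,j}^H · (⟨y_n,f_k^n⟩)_n) ((v_{k,j})_m ẽ_k^m)_m using singular systems (μ_{k,j}, u_{k,j}, v_{k,j}) of the matrices Λ_k. If the Picard condition Σ_k Σ_{j=1}^{r_k} μ_{k,j}⁻² |(⟨y_n,f_k^n⟩)_n|² < ∞ holds, then 𝒜y is a well-defined element of X with ‖𝒜y‖²_X ≤ B1⁻¹ Σ_k Σ_j μ_{k,j}⁻² |(⟨y_n,f_k^n⟩)_n|². -/

import Mathlib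

open scoped ComplexInnerProductSpace

private lemma picard_finset_synth_bound {E : Type*} [NormedAddCommGroup E]
    [InnerProductSpace ℂ E]
    (g : ℕ → E) (B : ℝ) (hB : 0 < B)
    (hg : ∀ x : E, Summable (fun k => ‖⟪g k, x⟫‖ ^ 2) ∧ ∑' k, ‖⟪g k, x⟫‖ ^ 2 ≤ B * ‖x‖ ^ 2)
    (a : ℕ → ℂ) (F : Finset ℕ) :
    ‖∑ k ∈ F, a k • g k‖ ^ 2 ≤ B * ∑ k ∈ F, ‖a k‖ ^ 2 := by
  set s : E := ∑ k ∈ F, a k • g k with hsdef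
  have hinner : ∀ x : E, (⟪x, s⟫ : ℂ) = ∑ k ∈ F, a k * ⟪x, g k⟫ := by
    intro x
    rw [hsdef, inner_sum]
    simp [inner_smul_right]
  have h0 : ‖s‖ ^ 2 ≤ ∑ k ∈ F, ‖a k‖ * ‖⟪s, g k⟫‖ := by
    calc ‖s‖ ^ 2 = RCLike.re (⟪s, s⟫ : ℂ) := (inner_self_eq_norm_sq s).symm
      _ ≤ ‖(⟪s, s⟫ : ℂ)‖ := RCLike.re_le_norm _
      _ = ‖∑ k ∈ F, a k * ⟪s, g k⟫‖ := by rw [hinner s]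
      _ ≤ ∑ k ∈ F, ‖a k * ⟪s, g k⟫‖ := norm_sum_le _ _
      _ = ∑ k ∈ F, ‖a k‖ * ‖⟪s, g k⟫‖ := by simp [norm_mul]
  have h2 : (∑ k ∈ F, ‖a k‖ * ‖⟪s, g k⟫‖) ^ 2 ≤
      (∑ k ∈ F, ‖a k‖ ^ 2) * ∑ k ∈ F, ‖⟪s, g k⟫‖ ^ 2 :=
    Finset.sum_mul_sq_le_sq_mul_sq F _ _
  have h3 : ∑ k ∈ F, ‖⟪s, g k⟫‖ ^ 2 ≤ B * ‖s‖ ^ 2 := by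
    have heq : ∀ k, ‖(⟪s, g k⟫ : ℂ)‖ = ‖(⟪g k, s⟫ : ℂ)‖ := fun k => norm_inner_symm _ _
    calc ∑ k ∈ F, ‖⟪s, g k⟫‖ ^ 2 = ∑ k ∈ F, ‖⟪g k, s⟫‖ ^ 2 := by simp_rw [heq]
      _ ≤ ∑' k, ‖⟪g k, s⟫‖ ^ 2 := Summable.sum_le_tsum F (fun k _ => sq_nonneg _) (hg s).1
      _ ≤ B * ‖s‖ ^ 2 := (hg s).2
  set p : ℝ := ‖s‖ ^ 2 with hp
  set q : ℝ := ∑ k ∈ F, ‖a k‖ ^ 2 with hq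
  have hp0 : 0 ≤ p := sq_nonneg _
  have hq0 : 0 ≤ q := Finset.sum_nonneg fun _ _ => sq_nonneg _
  have hr0 : 0 ≤ ∑ k ∈ F, ‖a k‖ * ‖⟪s, g k⟫‖ :=
    Finset.sum_nonneg fun _ _ => mul_nonneg (norm_nonneg _) (norm_nonneg _)
  rcases eq_or_lt_of_le hp0 with h | h
  · rw [← h]; positivity
  · have hpp : p * p ≤ (B * q) * p := by nlinarith
    exact le_of_mul_le_mul_right hpp h

private lemma picard_synthesis {E : Type*} [NormedAddCommGroup E] [InnerProductSpace ℂ E]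
    [CompleteSpace E]
    (g : ℕ → E) (B : ℝ) (hB : 0 < B)
    (hg : ∀ x : E, Summable (fun k => ‖⟪g k, x⟫‖ ^ 2) ∧ ∑' k, ‖⟪g k, x⟫‖ ^ 2 ≤ B * ‖x‖ ^ 2)
    (a : ℕ → ℂ) (ha : Summable fun k => ‖a k‖ ^ 2) :
    ∃ z : E, HasSum (fun k => a k • g k) z ∧ ‖z‖ ^ 2 ≤ B * ∑' k, ‖a k‖ ^ 2 := by
  have key := picard_finset_synth_bound g B hB hg a
  have hsum : Summable fun k => a k • g k := by
    rw [summable_iff_vanishing_norm]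
    intro ε hε
    obtain ⟨F, hF⟩ := summable_iff_vanishing_norm.mp ha (ε ^ 2 / B) (by positivity)
    refine ⟨F, fun t ht => ?_⟩
    have h2 : ∑ k ∈ t, ‖a k‖ ^ 2 < ε ^ 2 / B := by
      have := hF t ht
      rwa [Real.norm_of_nonneg (Finset.sum_nonneg fun _ _ => sq_nonneg _)] at this
    have h3 : ‖∑ k ∈ t, a k • g k‖ ^ 2 < ε ^ 2 := by
      calc ‖∑ k ∈ t, a k • g k‖ ^ 2 ≤ B * ∑ k ∈ t, ‖a k‖ ^ 2 := key t
        _ < B * (ε ^ 2 / B) := (mul_lt_mul_iff_right₀ hB).mpr h2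
        _ = ε ^ 2 := by field_simp
    nlinarith [norm_nonneg (∑ k ∈ t, a k • g k)]
  refine ⟨∑' k, a k • g k, hsum.hasSum, ?_⟩
  have htend : Filter.Tendsto (fun F : Finset ℕ => ‖∑ k ∈ F, a k • g k‖ ^ 2)
      Filter.atTop (nhds (‖∑' k, a k • g k‖ ^ 2)) :=
    (hsum.hasSum.norm.pow 2)
  refine le_of_tendsto htend (Filter.Eventually.of_forall fun F => ?_)
  calc ‖∑ k ∈ F, a k • g k‖ ^ 2 ≤ B * ∑ k ∈ F, ‖a k‖ ^ 2 := key F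
    _ ≤ B * ∑' k, ‖a k‖ ^ 2 := by
        have := Summable.sum_le_tsum F (fun k _ => sq_nonneg (‖a k‖)) ha
        exact mul_le_mul_of_nonneg_left this hB.le

private lemma picard_dual_frame_bound {E : Type*} [NormedAddCommGroup E]
    [InnerProductSpace ℂ E]
    (e : ℕ → E) (B1 : ℝ) (hB1 : 0 < B1)
    (hframe : ∀ x : E, Summable (fun k => ‖⟪e k, x⟫‖ ^ 2) ∧
      B1 * ‖x‖ ^ 2 ≤ ∑' k, ‖⟪e k, x⟫‖ ^ 2)
    (S T : E →L[ℂ] E)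
    (hS : ∀ x, HasSum (fun k => ⟪e k, x⟫ • e k) (S x))
    (hST : S ∘L T = 1) (x : E) :
    Summable (fun k => ‖⟪T (e k), x⟫‖ ^ 2) ∧
      ∑' k, ‖⟪T (e k), x⟫‖ ^ 2 ≤ B1⁻¹ * ‖x‖ ^ 2 := by
  have hSTx : ∀ w : E, S (T w) = w := by
    intro w
    have := ContinuousLinearMap.ext_iff.mp hST w
    simpa using this
  have hinner : ∀ a b : E, HasSum (fun k => ⟪e k, a⟫ * ⟪b, e k⟫) ⟪b, S a⟫ := by
    intro a b
    have := (hS a).mapL (innerSL ℂ b)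
    simpa [inner_smul_right, mul_comm] using this
  have hsym : ∀ a b : E, (⟪S a, b⟫ : ℂ) = ⟪a, S b⟫ := by
    intro a b
    have h1 : HasSum (fun k => (starRingEnd ℂ) (⟪e k, a⟫ * ⟪b, e k⟫))
        ((starRingEnd ℂ) ⟪b, S a⟫) := (hinner a b).star
    have heq : ∀ k, (starRingEnd ℂ) (⟪e k, a⟫ * ⟪b, e k⟫) = ⟪e k, b⟫ * ⟪a, e k⟫ := by
      intro k
      rw [map_mul, inner_conj_symm, inner_conj_symm]
      ring
    have heq2 : (starRingEnd ℂ) (⟪b, S a⟫ : ℂ) = ⟪S a, b⟫ := inner_conj_symm _ _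
    have h1' : HasSum (fun k => ⟪e k, b⟫ * ⟪a, e k⟫) ⟪S a, b⟫ := by
      simpa only [heq, heq2] using h1
    exact h1'.unique (hinner b a)
  have hTsym : ∀ a b : E, (⟪T a, b⟫ : ℂ) = ⟪a, T b⟫ := by
    intro a b
    calc (⟪T a, b⟫ : ℂ) = ⟪T a, S (T b)⟫ := by rw [hSTx b]
      _ = ⟪S (T a), T b⟫ := (hsym _ _).symm
      _ = ⟪a, T b⟫ := by rw [hSTx a]
  set t : E := T x with ht
  have hkey : ∀ k, (⟪T (e k), x⟫ : ℂ) = ⟪e k, t⟫ := fun k => hTsym (e k) x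
  have hsummable : Summable (fun k => ‖⟪T (e k), x⟫‖ ^ 2) := by
    simp only [hkey]
    exact (hframe t).1
  refine ⟨hsummable, ?_⟩
  set P : ℝ := ∑' k, ‖⟪e k, t⟫‖ ^ 2 with hPdef
  have hPeq : ∑' k, ‖⟪T (e k), x⟫‖ ^ 2 = P := by simp only [hkey]; rfl
  rw [hPeq]
  have hreal : HasSum (fun k => ((‖⟪e k, t⟫‖ ^ 2 : ℝ) : ℂ)) ((P : ℝ) : ℂ) :=
    ((hframe t).1.hasSum).mapL Complex.ofRealCLM
  have hC : HasSum (fun k => ⟪e k, t⟫ * ⟪t, e k⟫) ⟪t, S t⟫ := hinner t t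
  have hterm : ∀ k, (⟪e k, t⟫ : ℂ) * ⟪t, e k⟫ = ((‖⟪e k, t⟫‖ ^ 2 : ℝ) : ℂ) := by
    intro k
    rw [← inner_conj_symm t (e k)]
    rw [Complex.mul_conj']
    push_cast
    ring
  have hPC : ((P : ℝ) : ℂ) = ⟪t, x⟫ := by
    have hC' : HasSum (fun k => ((‖⟪e k, t⟫‖ ^ 2 : ℝ) : ℂ)) ⟪t, S t⟫ := by
      simpa only [hterm] using hC
    have := hreal.unique hC'
    rw [this, ht, hSTx x]
  have h1 : P ≤ ‖t‖ * ‖x‖ := by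
    have hre : P = (⟪t, x⟫ : ℂ).re := by rw [← hPC]; simp
    rw [hre]
    calc (⟪t, x⟫ : ℂ).re ≤ ‖(⟪t, x⟫ : ℂ)‖ := by
          simpa using Complex.re_le_norm (⟪t, x⟫ : ℂ)
      _ ≤ ‖t‖ * ‖x‖ := norm_inner_le_norm t x
  have h2 : B1 * ‖t‖ ^ 2 ≤ P := (hframe t).2
  rw [inv_mul_eq_div, le_div_iff₀ hB1]
  nlinarith [sq_nonneg (‖x‖ - B1 * ‖t‖), mul_le_mul_of_nonneg_left h1 hB1.le,
    mul_le_mul_of_nonneg_left h2 hB1.le, norm_nonneg t, norm_nonneg x]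

/-- Picard condition and well-definedness of `𝒜y`: using singular systems
`(μ k j, u k j, v k j)` of the matrices `Λ k`, if
`∑_k ∑_j μ_{k,j}⁻² ‖(⟪f n k, y n⟫)_n‖² < ∞` then
`𝒜y := ∑_k ∑_j μ_{k,j}⁻¹ (u_{k,j}ᴴ ⬝ W k)((v_{k,j})_m • ẽ m k)_m` is a well-defined
element of `X` with `‖𝒜y‖² ≤ B1⁻¹ ∑_k ∑_j μ_{k,j}⁻² ‖W k‖²`. -/
theorem picard_condition_well_definedness
    {M N : ℕ}
    {Xs : Fin M → Type*} [∀ m, NormedAddCommGroup (Xs m)]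
    [∀ m, InnerProductSpace ℂ (Xs m)] [∀ m, CompleteSpace (Xs m)]
    {Ys : Fin N → Type*} [∀ n, NormedAddCommGroup (Ys n)]
    [∀ n, InnerProductSpace ℂ (Ys n)] [∀ n, CompleteSpace (Ys n)]
    (A : PiLp 2 Xs →L[ℂ] PiLp 2 Ys)
    (e : ∀ m, ℕ → Xs m) (f : ∀ n, ℕ → Ys n)
    (B1 B2 C1 C2 : ℝ) (hB1 : 0 < B1) (hB2 : 0 < B2) (hC1 : 0 < C1) (hC2 : 0 < C2)
    (hframe_e : ∀ (m) (x : Xs m), (Summable fun k => ‖⟪e m k, x⟫‖ ^ 2) ∧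
      B1 * ‖x‖ ^ 2 ≤ ∑' k, ‖⟪e m k, x⟫‖ ^ 2 ∧ ∑' k, ‖⟪e m k, x⟫‖ ^ 2 ≤ B2 * ‖x‖ ^ 2)
    (hframe_f : ∀ (n) (y : Ys n), (Summable fun k => ‖⟪f n k, y⟫‖ ^ 2) ∧
      C1 * ‖y‖ ^ 2 ≤ ∑' k, ‖⟪f n k, y⟫‖ ^ 2 ∧ ∑' k, ‖⟪f n k, y⟫‖ ^ 2 ≤ C2 * ‖y‖ ^ 2)
    -- the frame operators `S m` of the frames `e m` and their inverses `T m`,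
    -- giving the dual frames `ẽ m k := T m (e m k)`
    (S T : ∀ m, Xs m →L[ℂ] Xs m)
    (hS : ∀ (m) (x : Xs m), HasSum (fun k => ⟪e m k, x⟫ • e m k) (S m x))
    (hST : ∀ m, S m ∘L T m = 1) (hTS : ∀ m, T m ∘L S m = 1)
    (Λ : ℕ → Matrix (Fin N) (Fin M) ℂ)
    (hΛ : ∀ (k : ℕ) (x : PiLp 2 Xs) (n : Fin N),
      ⟪f n k, A x n⟫ = ∑ m, Λ k n m * ⟪e m k, x m⟫)
    -- singular systems of the matrices `Λ k`
    (r : ℕ → ℕ)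
    (μ : ∀ k, Fin (r k) → ℝ)
    (u : ∀ k, Fin (r k) → EuclideanSpace ℂ (Fin N))
    (v : ∀ k, Fin (r k) → EuclideanSpace ℂ (Fin M))
    (hμ : ∀ k j, 0 < μ k j)
    (hu : ∀ k, Orthonormal ℂ (u k)) (hv : ∀ k, Orthonormal ℂ (v k))
    (hSVD : ∀ (k : ℕ) (h : EuclideanSpace ℂ (Fin M)),
      (Λ k).mulVec (fun m => h m) =
        fun n => ∑ j, (μ k j : ℂ) * ⟪v k j, h⟫ * u k j n)
    (y : PiLp 2 Ys)
    (W : ℕ → EuclideanSpace ℂ (Fin N))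
    (hW : ∀ k n, W k n = ⟪f n k, y n⟫)
    (hPicard : Summable fun k => ∑ j, ((μ k j) ^ 2)⁻¹ * ‖W k‖ ^ 2) :
    ∃ z : PiLp 2 Xs,
      (∀ m, HasSum
        (fun k => (∑ j, ((μ k j : ℝ) : ℂ)⁻¹ * ⟪u k j, W k⟫ * v k j m) • T m (e m k))
        (z m)) ∧
      ‖z‖ ^ 2 ≤ B1⁻¹ * ∑' k, ∑ j, ((μ k j) ^ 2)⁻¹ * ‖W k‖ ^ 2 := by
  classical
  set a : Fin M → ℕ → ℂ :=
    fun m k => ∑ j, ((μ k j : ℝ) : ℂ)⁻¹ * ⟪u k j, W k⟫ * v k j m with ha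
  have hak : ∀ k, ∑ m, ‖a m k‖ ^ 2 ≤ ∑ j, ((μ k j) ^ 2)⁻¹ * ‖W k‖ ^ 2 := by
    intro k
    set l : Fin (r k) → ℂ := fun j => ((μ k j : ℝ) : ℂ)⁻¹ * ⟪u k j, W k⟫ with hl
    set c : EuclideanSpace ℂ (Fin M) := ∑ j, l j • v k j with hc
    have hcm : ∀ m, c m = a m k := by
      intro m
      have hev := map_sum (EuclideanSpace.proj (𝕜 := ℂ) (ι := Fin M) m)
        (fun j => l j • v k j) Finset.univ
      change ((∑ j, l j • v k j : EuclideanSpace ℂ (Fin M)) m) = ∑ j, (l j • v k j) m at hev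
      rw [hc]
      rw [show ((∑ j, l j • v k j : EuclideanSpace ℂ (Fin M)) m) =
        ∑ j, (l j • v k j) m from hev]
      simp only [PiLp.smul_apply, smul_eq_mul, hl, ha]
      try exact Finset.sum_congr rfl fun j _ => by ring
    have h1 : ∑ m, ‖c m‖ ^ 2 = ‖c‖ ^ 2 := by
      rw [EuclideanSpace.norm_eq,
        Real.sq_sqrt (Finset.sum_nonneg fun _ _ => sq_nonneg _)]
    have h2 : ‖c‖ ^ 2 = ∑ j, ‖l j‖ ^ 2 := by
      have hi : (⟪c, c⟫ : ℂ) = ∑ j, (starRingEnd ℂ) (l j) * l j :=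
        (hv k).inner_sum l l Finset.univ
      have hcc : (⟪c, c⟫ : ℂ) = ((∑ j, ‖l j‖ ^ 2 : ℝ) : ℂ) := by
        rw [hi]
        push_cast
        exact Finset.sum_congr rfl fun j _ => Complex.conj_mul' (l j)
      calc ‖c‖ ^ 2 = RCLike.re (⟪c, c⟫ : ℂ) := (inner_self_eq_norm_sq c).symm
        _ = ∑ j, ‖l j‖ ^ 2 := by rw [hcc, RCLike.re_to_complex, Complex.ofReal_re]
    have h3 : ∀ j, ‖l j‖ ^ 2 ≤ ((μ k j) ^ 2)⁻¹ * ‖W k‖ ^ 2 := by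
      intro j
      have hn : ‖l j‖ = (μ k j)⁻¹ * ‖(⟪u k j, W k⟫ : ℂ)‖ := by
        rw [hl]
        simp only []
        rw [norm_mul, norm_inv, Complex.norm_real, Real.norm_of_nonneg (hμ k j).le]
      have hb : ‖(⟪u k j, W k⟫ : ℂ)‖ ≤ ‖W k‖ := by
        have h := norm_inner_le_norm (𝕜 := ℂ) (u k j) (W k)
        rwa [(hu k).1 j, one_mul] at h
      have hμ0 : (0:ℝ) < (μ k j)⁻¹ := inv_pos.mpr (hμ k j)
      calc ‖l j‖ ^ 2 = ((μ k j)⁻¹) ^ 2 * ‖(⟪u k j, W k⟫ : ℂ)‖ ^ 2 := by rw [hn]; ring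
        _ ≤ ((μ k j)⁻¹) ^ 2 * ‖W k‖ ^ 2 := by
            exact mul_le_mul_of_nonneg_left
              (pow_le_pow_left₀ (norm_nonneg _) hb 2) (sq_nonneg _)
        _ = ((μ k j) ^ 2)⁻¹ * ‖W k‖ ^ 2 := by rw [inv_pow]
    calc ∑ m, ‖a m k‖ ^ 2 = ∑ m, ‖c m‖ ^ 2 := by
          exact Finset.sum_congr rfl fun m _ => by rw [hcm m]
      _ = ∑ j, ‖l j‖ ^ 2 := h1.trans h2
      _ ≤ ∑ j, ((μ k j) ^ 2)⁻¹ * ‖W k‖ ^ 2 := Finset.sum_le_sum fun j _ => h3 j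
  have haS : ∀ m, Summable fun k => ‖a m k‖ ^ 2 := by
    intro m
    refine Summable.of_nonneg_of_le (fun k => sq_nonneg _) (fun k => ?_) hPicard
    calc ‖a m k‖ ^ 2 ≤ ∑ m', ‖a m' k‖ ^ 2 :=
          Finset.single_le_sum (f := fun m' => ‖a m' k‖ ^ 2)
            (fun _ _ => sq_nonneg _) (Finset.mem_univ m)
      _ ≤ _ := hak k
  have hsyn : ∀ m, ∃ zm : Xs m, HasSum (fun k => a m k • T m (e m k)) zm ∧
      ‖zm‖ ^ 2 ≤ B1⁻¹ * ∑' k, ‖a m k‖ ^ 2 := by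
    intro m
    refine picard_synthesis _ B1⁻¹ (by positivity) ?_ (a m) (haS m)
    intro x
    exact picard_dual_frame_bound (e m) B1 hB1
      (fun x => ⟨(hframe_e m x).1, (hframe_e m x).2.1⟩) (S m) (T m) (hS m) (hST m) x
  choose z hz hzb using hsyn
  refine ⟨(WithLp.toLp 2 z), fun m => ?_, ?_⟩
  · simpa only [ha] using hz m
  · have hnorm : ‖(WithLp.toLp 2 z : PiLp 2 Xs)‖ ^ 2 = ∑ m, ‖z m‖ ^ 2 :=
      PiLp.norm_sq_eq_of_L2 Xs (WithLp.toLp 2 z)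
    rw [hnorm]
    have hQ : ∑ m, (∑' k, ‖a m k‖ ^ 2) = ∑' k, ∑ m, ‖a m k‖ ^ 2 :=
      (Summable.tsum_finsetSum (fun m _ => haS m)).symm
    calc ∑ m, ‖z m‖ ^ 2 ≤ ∑ m, B1⁻¹ * ∑' k, ‖a m k‖ ^ 2 :=
          Finset.sum_le_sum fun m _ => hzb m
      _ = B1⁻¹ * ∑' k, ∑ m, ‖a m k‖ ^ 2 := by rw [← Finset.mul_sum, hQ]
      _ ≤ B1⁻¹ * ∑' k, ∑ j, ((μ k j) ^ 2)⁻¹ * ‖W k‖ ^ 2 := by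
          refine mul_le_mul_of_nonneg_left ?_ (by positivity)
          refine Summable.tsum_le_tsum (fun k => hak k) ?_ hPicard
          exact Summable.of_nonneg_of_le
            (fun k => Finset.sum_nonneg fun _ _ => sq_nonneg _) (fun k => hak k) hPicard
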